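/- Define, for complex numbers b₁, b₂ with b₁ ≠ b₂, a complex number X with |X| small, and an integer n ≥ 0: I(n) = q^{-(3s+1/2)n}/(b₁−b₂) · [ (b₁^{n+1} − b₂^{n+1}) + (1−q⁻¹)·(b₁b₂X)/((1−b₁X)(1−b₂X)) · (b₁ⁿ − b₂ⁿ − b₁^{n+1}X + b₂^{n+1}X + b₁X(b₁b₂X)ⁿ − b₂X(b₁b₂X)ⁿ) ], where X = q^{-(3s−3/2)}. Then with c(l) := q^{−3sl−l/2}(b₁^{l+1} − b₂^{l+1})/(b₁−b₂) for l ≥ 0 and c(l) := 0 for l < 0, the identity I(n) = c(n) + Σ_{m=1}^{∞} (1−q⁻¹) q^{(−6s+1)m}(b₁b₂)^m c(n−m) holds (the sum is finite since c(n−m)=0 for m > n). -/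

import Mathlib

open Complex

/-- The closed-form expression
`I(n) = q^{-(3s+1/2)n}/(b₁−b₂) · [(b₁^{n+1} − b₂^{n+1})
  + (1−q⁻¹)(b₁b₂X)/((1−b₁X)(1−b₂X)) · (b₁ⁿ − b₂ⁿ − b₁^{n+1}X + b₂^{n+1}X
      + b₁X(b₁b₂X)ⁿ − b₂X(b₁b₂X)ⁿ)]`, where `X = q^{−(3s−3/2)}`. -/
noncomputable def Icf (q : ℝ) (s b₁ b₂ : ℂ) (n : ℕ) : ℂ :=
  (q : ℂ) ^ (-(3 * s + 1 / 2) * n) / (b₁ - b₂) *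
    ((b₁ ^ (n + 1) - b₂ ^ (n + 1)) +
      (1 - (q : ℂ)⁻¹) * (b₁ * b₂ * (q : ℂ) ^ (-(3 * s - 3 / 2))) /
          ((1 - b₁ * (q : ℂ) ^ (-(3 * s - 3 / 2))) *
            (1 - b₂ * (q : ℂ) ^ (-(3 * s - 3 / 2)))) *
        (b₁ ^ n - b₂ ^ n - b₁ ^ (n + 1) * (q : ℂ) ^ (-(3 * s - 3 / 2)) +
          b₂ ^ (n + 1) * (q : ℂ) ^ (-(3 * s - 3 / 2)) +
          b₁ * (q : ℂ) ^ (-(3 * s - 3 / 2)) *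
            (b₁ * b₂ * (q : ℂ) ^ (-(3 * s - 3 / 2))) ^ n -
          b₂ * (q : ℂ) ^ (-(3 * s - 3 / 2)) *
            (b₁ * b₂ * (q : ℂ) ^ (-(3 * s - 3 / 2))) ^ n))

/-- `c(l) = q^{−3sl−l/2}(b₁^{l+1} − b₂^{l+1})/(b₁−b₂)` for `l ≥ 0`, `c(l) = 0`
for `l < 0`. -/
noncomputable def ccf (q : ℝ) (s b₁ b₂ : ℂ) (l : ℤ) : ℂ :=
  if 0 ≤ l then
    (q : ℂ) ^ (-(3 * s) * l - l / 2) * (b₁ ^ (l + 1) - b₂ ^ (l + 1)) / (b₁ - b₂)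
  else 0

open Finset in
lemma key (a b u t : ℂ) (hab : a ≠ b) (h1 : 1 - a*u ≠ 0) (h2 : 1 - b*u ≠ 0) (n : ℕ) :
    (u*t^2)^n / (a-b) * ((a^(n+1) - b^(n+1)) + (1-t)*(a*b*u)/((1-a*u)*(1-b*u)) *
      (a^n - b^n - a^(n+1)*u + b^(n+1)*u + a*u*(a*b*u)^n - b*u*(a*b*u)^n))
    = (u*t^2)^n * (a^(n+1) - b^(n+1))/(a-b)
      + ∑ m ∈ Finset.range n, (1-t) * (u^2*t^2)^(m+1) * (a*b)^(m+1) *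
          ((u*t^2)^(n-m-1) * (a^(n-m) - b^(n-m))/(a-b)) := by
  have hab' : a - b ≠ 0 := sub_ne_zero.2 hab
  have ha1 : a*u ≠ 1 := fun h => h1 (by rw [h]; ring)
  have hb1 : b*u ≠ 1 := fun h => h2 (by rw [h]; ring)
  have hsum : ∑ m ∈ Finset.range n, (1-t) * (u^2*t^2)^(m+1) * (a*b)^(m+1) *
          ((u*t^2)^(n-m-1) * (a^(n-m) - b^(n-m))/(a-b))
      = ∑ m ∈ Finset.range n,
          (((1-t) * (u*t^2)^n * a^(n+1) * (b*u) / (a-b)) * (b*u)^m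
          - ((1-t) * (u*t^2)^n * b^(n+1) * (a*u) / (a-b)) * (a*u)^m) := by
    refine Finset.sum_congr rfl fun m hm => ?_
    obtain ⟨k, hk⟩ := Nat.exists_eq_add_of_lt (Finset.mem_range.mp hm)
    rw [hk, show m+k+1 - m - 1 = k from by omega, show m+k+1 - m = k+1 from by omega]
    field_simp
    ring
  rw [hsum, Finset.sum_sub_distrib, ← Finset.mul_sum, ← Finset.mul_sum,
    geom_sum_eq ha1, geom_sum_eq hb1]
  have hau : a*u - 1 ≠ 0 := sub_ne_zero.2 ha1
  have hbu : b*u - 1 ≠ 0 := sub_ne_zero.2 hb1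
  have hau' : u*a - 1 ≠ 0 := by rwa [mul_comm]
  have hbu' : u*b - 1 ≠ 0 := by rwa [mul_comm]
  have h1' : 1 - u*a ≠ 0 := by rwa [mul_comm]
  have h2' : 1 - u*b ≠ 0 := by rwa [mul_comm]
  field_simp
  ring


/-- The identity `I(n) = c(n) + Σ_{m≥1} (1−q⁻¹) q^{(−6s+1)m}(b₁b₂)^m c(n−m)`
(the sum is finite since `c(n−m) = 0` for `m > n`). -/
theorem stmt11 (q : ℝ) (hq : 1 < q) (s b₁ b₂ : ℂ) (hb : b₁ ≠ b₂)
    (h1 : 1 - b₁ * (q : ℂ) ^ (-(3 * s - 3 / 2)) ≠ 0)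
    (h2 : 1 - b₂ * (q : ℂ) ^ (-(3 * s - 3 / 2)) ≠ 0)
    (n : ℕ) :
    Icf q s b₁ b₂ n =
      ccf q s b₁ b₂ n +
        ∑' m : ℕ,
          (1 - (q : ℂ)⁻¹) * (q : ℂ) ^ ((-6 * s + 1) * ((m : ℂ) + 1)) *
            (b₁ * b₂) ^ (m + 1) * ccf q s b₁ b₂ ((n : ℤ) - ((m : ℤ) + 1)) := by
  have hq0 : (q : ℂ) ≠ 0 := by
    exact_mod_cast ne_of_gt (by positivity : (0:ℝ) < q)
  set u : ℂ := (q : ℂ) ^ (-(3 * s - 3 / 2)) with hu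
  set t : ℂ := (q : ℂ)⁻¹ with ht
  -- q^(-2) = t^2
  have hqm2 : (q : ℂ) ^ (-2 : ℂ) = t^2 := by
    rw [show (-2 : ℂ) = ((-2 : ℤ) : ℂ) by norm_num, cpow_intCast]
    rw [ht, zpow_neg]
    norm_num
  have hpow : ∀ k : ℕ, (q : ℂ) ^ ((k : ℂ) * (-(3 * s - 3/2) + -2)) = (u * t^2)^k := by
    intro k
    rw [cpow_nat_mul, cpow_add _ _ hq0, hqm2, hu]
  -- ccf at a natural number
  have hccf : ∀ k : ℕ, ccf q s b₁ b₂ (k : ℤ)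
      = (u * t^2)^k * (b₁^(k+1) - b₂^(k+1)) / (b₁ - b₂) := by
    intro k
    rw [ccf, if_pos (by positivity)]
    have he : -(3 * s) * ((k:ℤ):ℂ) - ((k:ℤ):ℂ) / 2 = (k : ℂ) * (-(3 * s - 3/2) + -2) := by
      push_cast; ring
    rw [he, hpow k]
    norm_cast
  -- the coefficient q^((-6s+1)(m+1)) = (u^2 t^2)^(m+1)
  have hcoef : ∀ m : ℕ, (q : ℂ) ^ ((-6 * s + 1) * ((m : ℂ) + 1)) = (u^2 * t^2)^(m+1) := by
    intro m
    have he : (-6 * s + 1) * ((m : ℂ) + 1)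
        = ((m + 1 : ℕ) : ℂ) * ((2:ℕ) * (-(3 * s - 3/2)) + -2) := by push_cast; ring
    rw [he, cpow_nat_mul, cpow_add _ _ hq0, hqm2, cpow_nat_mul, hu]
  -- tsum reduces to a finite sum
  have hts : ∑' m : ℕ,
          (1 - (q : ℂ)⁻¹) * (q : ℂ) ^ ((-6 * s + 1) * ((m : ℂ) + 1)) *
            (b₁ * b₂) ^ (m + 1) * ccf q s b₁ b₂ ((n : ℤ) - ((m : ℤ) + 1))
      = ∑ m ∈ Finset.range n, (1 - t) * (u^2*t^2)^(m+1) * (b₁ * b₂) ^ (m + 1) *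
          ((u*t^2)^(n-m-1) * (b₁^(n-m) - b₂^(n-m)) / (b₁ - b₂)) := by
    rw [tsum_eq_sum (s := Finset.range n)
      (by
        intro m hm
        rw [Finset.mem_range, not_lt] at hm
        have : ccf q s b₁ b₂ ((n : ℤ) - ((m : ℤ) + 1)) = 0 := by
          rw [ccf, if_neg (by omega)]
        rw [this, mul_zero])]
    refine Finset.sum_congr rfl fun m hm => ?_
    have hmn := Finset.mem_range.mp hm
    have hl : (n : ℤ) - ((m : ℤ) + 1) = ((n - m - 1 : ℕ) : ℤ) := by omega
    rw [hl, hccf (n - m - 1), hcoef m, ← ht]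
    have h1' : n - m - 1 + 1 = n - m := by omega
    rw [h1']
  rw [hts, hccf n]
  have hA : (q : ℂ) ^ (-(3 * s + 1 / 2) * (n : ℂ)) = (u * t^2)^n := by
    rw [show -(3 * s + 1 / 2) * (n : ℂ) = (n : ℂ) * (-(3 * s - 3/2) + -2) by ring, hpow n]
  rw [Icf, hA, ← hu, ← ht]
  exact key b₁ b₂ u t hb h1 h2 n
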